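/- Let F be a face of A and b_1, b_2, …, b_k ∈ Z^d be elements all lying in the same coset of (QF ∩ Z^d)/ZF and such that each −b_i ∈ C F + Z^d appropriately; then the intersection ∩_{i=1}^k (N F − b_i) of translated copies of the semigroup N F is nonempty. Consequently, if a Z^d-graded module M has k filtration quotients isomorphic to S_F(b_{s_1}),…,S_F(b_{s_k}) with the b_{s_i} in a common coset of (QF∩Z^d)/ZF, then dim_C M_c ≥ k for some c ∈ Z^d. -/

import Mathlib

open scoped BigOperators

def col {d n : ℕ} (A : Matrix (Fin d) (Fin n) ℤ) (j : Fin n) : Fin d → ℤ := fun i => A i j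

noncomputable def posPt {n : ℕ} (u : Fin n → ℤ) : Fin n →₀ ℕ :=
  Finsupp.equivFunOnFinite.symm fun j => (u j).toNat

/-- The toric ideal `I_A ⊆ ℂ[∂]`. -/
noncomputable def toricIdeal {d n : ℕ} (A : Matrix (Fin d) (Fin n) ℤ) :
    Ideal (MvPolynomial (Fin n) ℂ) :=
  Ideal.span {p | ∃ u : Fin n → ℤ, A.mulVec u = 0 ∧
    p = MvPolynomial.monomial (posPt u) 1 - MvPolynomial.monomial (posPt (-u)) 1}

/-- The semigroup ring `S_A = ℂ[ℕA] = ℂ[∂]/I_A`. -/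
noncomputable abbrev SAring {d n : ℕ} (A : Matrix (Fin d) (Fin n) ℤ) :=
  MvPolynomial (Fin n) ℂ ⧸ toricIdeal A

/-- The semigroup `ℕF` generated by the columns in `F`. -/
def NFsg {d n : ℕ} (A : Matrix (Fin d) (Fin n) ℤ) (F : Finset (Fin n)) :
    AddSubmonoid (Fin d → ℤ) :=
  AddSubmonoid.closure (col A '' F)

/-- `F` is a face of `A`: cut out by a supporting functional. -/
def isFace {d n : ℕ} (A : Matrix (Fin d) (Fin n) ℤ) (F : Finset (Fin n)) : Prop :=
  ∃ h : Fin d → ℤ, (∀ j : Fin n, 0 ≤ ∑ i, h i * A i j) ∧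
    ∀ j : Fin n, j ∈ F ↔ ∑ i, h i * A i j = 0

/-- The face prime `I_A^F/I_A = ⟨∂_j : j ∉ F⟩ ⊆ S_A`, the annihilator of the
generator of the face ring `S_F` as a cyclic `S_A`-module. -/
noncomputable def facePrime {d n : ℕ} (A : Matrix (Fin d) (Fin n) ℤ)
    (F : Finset (Fin n)) : Ideal (SAring A) :=
  Ideal.span {x | ∃ j ∉ F, x = Ideal.Quotient.mk (toricIdeal A) (MvPolynomial.X j)}

/-- Zariski closure in `ℂ^d` of a set of lattice points. -/
def zariskiClosure {d : ℕ} (S : Set (Fin d → ℤ)) : Set (Fin d → ℂ) :=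
  {z | ∀ p : MvPolynomial (Fin d) ℂ,
    (∀ v ∈ S, MvPolynomial.eval (fun i => (v i : ℂ)) p = 0) → MvPolynomial.eval z p = 0}

/-- `qdeg S_F(b)`: the Zariski closure of `b - ℕF`, the quasi-degrees of the shifted
face ring with generator in degree `b` (with `deg ∂_j = -a_j`). -/
def qdegFace {d n : ℕ} (A : Matrix (Fin d) (Fin n) ℤ) (F : Finset (Fin n))
    (b : Fin d → ℤ) : Set (Fin d → ℂ) :=
  zariskiClosure {c | ∃ v ∈ NFsg A F, c = b - v}

/-- The lattice `ℤF` generated by the columns in `F`. -/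
def ZFlat {d n : ℕ} (A : Matrix (Fin d) (Fin n) ℤ) (F : Finset (Fin n)) :
    Submodule ℤ (Fin d → ℤ) :=
  Submodule.span ℤ (col A '' F)


/-! ### Auxiliary lemmas -/

section Aux

open scoped BigOperators

lemma prod_single_one' {ι G : Type*} [AddCommMonoid G] (s : Finset ι) (c : ι → G) :
    ∏ j ∈ s, AddMonoidAlgebra.single (c j) (1:ℂ) = AddMonoidAlgebra.single (∑ j ∈ s, c j) 1 := by
  classical
  induction s using Finset.induction_on with
  | empty => simp [AddMonoidAlgebra.one_def]
  | insert _ _ h ih =>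
    rw [Finset.prod_insert h, Finset.sum_insert h, ih, AddMonoidAlgebra.single_mul_single, mul_one]

lemma multiset_prod_single' {ι G : Type*} [AddCommMonoid G] (l : Multiset ι) (c : ι → G) :
    (l.map fun j => AddMonoidAlgebra.single (c j) (1:ℂ)).prod
      = AddMonoidAlgebra.single ((l.map c).sum) 1 := by
  induction l using Multiset.induction_on with
  | empty => simp [AddMonoidAlgebra.one_def]
  | cons a l ih =>
    simp only [Multiset.map_cons, Multiset.prod_cons, Multiset.sum_cons, ih,
      AddMonoidAlgebra.single_mul_single, mul_one]

lemma ZF_diff {d n : ℕ} (A : Matrix (Fin d) (Fin n) ℤ) (F : Finset (Fin n))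
    {x : Fin d → ℤ} (hx : x ∈ ZFlat A F) :
    ∃ p ∈ NFsg A F, ∃ q ∈ NFsg A F, x = p - q := by
  refine Submodule.span_induction ?_ ?_ ?_ ?_ hx
  · intro y hy
    exact ⟨y, AddSubmonoid.subset_closure hy, 0, (NFsg A F).zero_mem, by simp⟩
  · exact ⟨0, (NFsg A F).zero_mem, 0, (NFsg A F).zero_mem, by simp⟩
  · rintro y z _ _ ⟨p, hp, q, hq, rfl⟩ ⟨p', hp', q', hq', rfl⟩
    exact ⟨p + p', (NFsg A F).add_mem hp hp', q + q', (NFsg A F).add_mem hq hq', by abel⟩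
  · rintro a y _ ⟨p, hp, q, hq, rfl⟩
    obtain ⟨m, rfl | rfl⟩ := a.eq_nat_or_neg
    · refine ⟨m • p, (NFsg A F).nsmul_mem hp m, m • q, (NFsg A F).nsmul_mem hq m, ?_⟩
      rw [smul_sub, natCast_zsmul, natCast_zsmul]
    · refine ⟨m • q, (NFsg A F).nsmul_mem hq m, m • p, (NFsg A F).nsmul_mem hp m, ?_⟩
      rw [neg_smul, smul_sub, natCast_zsmul, natCast_zsmul, neg_sub]

lemma NF_multiset {d n : ℕ} (A : Matrix (Fin d) (Fin n) ℤ) (F : Finset (Fin n))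
    {x : Fin d → ℤ} (hx : x ∈ NFsg A F) :
    ∃ l : Multiset (Fin n), (∀ j ∈ l, j ∈ F) ∧ (l.map (col A)).sum = x := by
  refine AddSubmonoid.closure_induction ?_ ?_ ?_ hx
  · rintro y ⟨j, hj, rfl⟩
    exact ⟨{j}, by simpa using hj, by simp⟩
  · exact ⟨0, by simp, by simp⟩
  · rintro y z _ _ ⟨l, hl, rfl⟩ ⟨l', hl', rfl⟩
    refine ⟨l + l', ?_, by simp⟩
    intro j hj
    rcases Multiset.mem_add.mp hj with h | h
    exacts [hl j h, hl' j h]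

lemma weight_sum {d n : ℕ} (A : Matrix (Fin d) (Fin n) ℤ) (h : Fin d → ℤ) (v : Fin n →₀ ℕ) :
    ∑ i, h i * (∑ j : Fin n, (v j) • col A j) i
      = ∑ j : Fin n, (v j : ℤ) * ∑ i, h i * A i j := by
  simp only [Finset.sum_apply, Pi.smul_apply, col, smul_eq_mul, nsmul_eq_mul,
    Finset.mul_sum]
  rw [Finset.sum_comm]
  exact Finset.sum_congr rfl fun j _ => Finset.sum_congr rfl fun i _ => by simp [col]; ring

lemma face_step {d n : ℕ} (A : Matrix (Fin d) (Fin n) ℤ) (F : Finset (Fin n))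
    (h : Fin d → ℤ)
    (h1 : ∀ j : Fin n, 0 ≤ ∑ i, h i * A i j)
    (h2 : ∀ j : Fin n, j ∈ F ↔ ∑ i, h i * A i j = 0)
    (v w : Fin n →₀ ℕ)
    (hbal : ∑ j : Fin n, (v j) • col A j = ∑ j : Fin n, (w j) • col A j)
    (hv : ∀ j ∈ v.support, j ∈ F) : ∀ j ∈ w.support, j ∈ F := by
  have hv0 : ∑ j : Fin n, (v j : ℤ) * ∑ i, h i * A i j = 0 := by
    refine Finset.sum_eq_zero fun j _ => ?_
    by_cases hj : j ∈ v.support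
    · rw [(h2 j).mp (hv j hj), mul_zero]
    · rw [Finsupp.notMem_support_iff.mp hj]; simp
  have hw0 : ∑ j : Fin n, (w j : ℤ) * ∑ i, h i * A i j = 0 := by
    rw [← weight_sum, ← hbal, weight_sum, hv0]
  have hz0 := (Finset.sum_eq_zero_iff_of_nonneg
    (fun j _ => mul_nonneg (Int.natCast_nonneg _) (h1 j))).mp hw0
  intro j hj
  have hz := hz0 j (Finset.mem_univ j)
  rcases mul_eq_zero.mp hz with hz | hz
  · exact absurd (by exact_mod_cast hz) (Finsupp.mem_support_iff.mp hj)
  · exact (h2 j).mpr hz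

/-- The character of `ℂ[∂]` sending `∂_j` to `t^{a_j}` for `j ∈ F` and to `0` otherwise. -/
noncomputable def phiF {d n : ℕ} (A : Matrix (Fin d) (Fin n) ℤ) (F : Finset (Fin n)) :
    MvPolynomial (Fin n) ℂ →ₐ[ℂ] AddMonoidAlgebra ℂ (Fin d → ℤ) :=
  MvPolynomial.aeval fun j => if j ∈ F then AddMonoidAlgebra.single (col A j) (1:ℂ) else 0

lemma phiF_monomial_of_face {d n : ℕ} (A : Matrix (Fin d) (Fin n) ℤ) (F : Finset (Fin n))
    (v : Fin n →₀ ℕ) (hv : ∀ j ∈ v.support, j ∈ F) :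
    phiF A F (MvPolynomial.monomial v 1)
      = AddMonoidAlgebra.single (∑ j : Fin n, (v j) • col A j) 1 := by
  rw [phiF, MvPolynomial.aeval_monomial, map_one, one_mul,
    Finsupp.prod_fintype _ _ (fun i => pow_zero _)]
  rw [← prod_single_one']
  refine Finset.prod_congr rfl fun j _ => ?_
  by_cases hj : j ∈ v.support
  · rw [if_pos (hv j hj), AddMonoidAlgebra.single_pow, one_pow]
  · rw [Finsupp.notMem_support_iff.mp hj, pow_zero, zero_smul]
    simp [AddMonoidAlgebra.one_def]

lemma phiF_monomial_of_not_face {d n : ℕ} (A : Matrix (Fin d) (Fin n) ℤ) (F : Finset (Fin n))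
    (v : Fin n →₀ ℕ) {j0 : Fin n} (hj0 : j0 ∈ v.support) (hj0F : j0 ∉ F) :
    phiF A F (MvPolynomial.monomial v 1) = 0 := by
  rw [phiF, MvPolynomial.aeval_monomial, map_one, one_mul,
    Finsupp.prod_fintype _ _ (fun i => pow_zero _)]
  refine Finset.prod_eq_zero (Finset.mem_univ j0) ?_
  rw [if_neg hj0F]
  exact zero_pow (Finsupp.mem_support_iff.mp hj0)

lemma posPt_balance {d n : ℕ} (A : Matrix (Fin d) (Fin n) ℤ) {u : Fin n → ℤ}
    (hu : A.mulVec u = 0) :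
    ∑ j : Fin n, (posPt u j) • col A j = ∑ j : Fin n, (posPt (-u) j) • col A j := by
  funext i
  rw [Finset.sum_apply, Finset.sum_apply, ← sub_eq_zero, ← Finset.sum_sub_distrib]
  have key : ∀ j : Fin n, (posPt u j • col A j) i - (posPt (-u) j • col A j) i = u j * A i j := by
    intro j
    simp only [posPt, Finsupp.coe_equivFunOnFinite_symm, Pi.smul_apply, col,
      smul_eq_mul, nsmul_eq_mul, Pi.neg_apply]
    rw [← sub_mul, Int.toNat_sub_toNat_neg]
  rw [Finset.sum_congr rfl fun j _ => key j]
  have := congrFun hu i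
  simpa [Matrix.mulVec, dotProduct, mul_comm] using this

lemma toricIdeal_le_ker {d n : ℕ} (A : Matrix (Fin d) (Fin n) ℤ) (F : Finset (Fin n))
    (hF : isFace A F) : toricIdeal A ≤ RingHom.ker (phiF A F).toRingHom := by
  obtain ⟨h, h1, h2⟩ := hF
  rw [toricIdeal, Ideal.span_le]
  rintro p ⟨u, hu, rfl⟩
  rw [SetLike.mem_coe, RingHom.mem_ker, AlgHom.toRingHom_eq_coe, RingHom.coe_coe, map_sub,
    sub_eq_zero]
  by_cases hsupp : ∀ j ∈ (posPt u).support, j ∈ F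
  · have hsupp' : ∀ j ∈ (posPt (-u)).support, j ∈ F :=
      face_step A F h h1 h2 _ _ (posPt_balance A hu) hsupp
    rw [phiF_monomial_of_face A F _ hsupp, phiF_monomial_of_face A F _ hsupp',
      posPt_balance A hu]
  · push_neg at hsupp
    obtain ⟨j0, hj0, hj0F⟩ := hsupp
    have hsupp' : ¬ ∀ j ∈ (posPt (-u)).support, j ∈ F := by
      intro hall
      exact hj0F (face_step A F h h1 h2 _ _ (posPt_balance A hu).symm hall j0 hj0)
    push_neg at hsupp'
    obtain ⟨j1, hj1, hj1F⟩ := hsupp'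
    rw [phiF_monomial_of_not_face A F _ hj0 hj0F, phiF_monomial_of_not_face A F _ hj1 hj1F]

lemma mk_prodX_not_mem_facePrime {d n : ℕ} (A : Matrix (Fin d) (Fin n) ℤ) (F : Finset (Fin n))
    (hF : isFace A F) (l : Multiset (Fin n)) (hl : ∀ j ∈ l, j ∈ F) :
    Ideal.Quotient.mk (toricIdeal A) (l.map MvPolynomial.X).prod ∉ facePrime A F := by
  set ψ := Ideal.Quotient.lift (toricIdeal A) (phiF A F).toRingHom
    (fun a ha => RingHom.mem_ker.mp (toricIdeal_le_ker A F hF ha)) with hψ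
  have hfp : facePrime A F ≤ RingHom.ker ψ := by
    rw [facePrime, Ideal.span_le]
    rintro x ⟨j, hj, rfl⟩
    rw [SetLike.mem_coe, RingHom.mem_ker, hψ, Ideal.Quotient.lift_mk]
    simp [phiF, hj]
  intro hmem
  have h0 : ψ (Ideal.Quotient.mk (toricIdeal A) (l.map MvPolynomial.X).prod) = 0 :=
    RingHom.mem_ker.mp (hfp hmem)
  rw [hψ, Ideal.Quotient.lift_mk] at h0
  rw [AlgHom.toRingHom_eq_coe, RingHom.coe_coe, map_multiset_prod, Multiset.map_map] at h0
  rw [Multiset.map_congr rfl (fun j hj => by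
    show phiF A F (MvPolynomial.X j) = AddMonoidAlgebra.single (col A j) (1:ℂ)
    simp [phiF, hl j hj])] at h0
  rw [multiset_prod_single'] at h0
  exact one_ne_zero (AddMonoidAlgebra.single_eq_zero.mp h0)

lemma prodX_smul_mem {d n : ℕ} (A : Matrix (Fin d) (Fin n) ℤ)
    {M : Type} [AddCommGroup M] [Module ℂ M] [Module (SAring A) M]
    [IsScalarTower ℂ (SAring A) M] (g : (Fin d → ℤ) → Submodule ℂ M)
    (hX : ∀ (j : Fin n) (b' : Fin d → ℤ), ∀ m ∈ g b',
      (Ideal.Quotient.mk (toricIdeal A) (MvPolynomial.X j)) • m ∈ g (b' - col A j))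
    (l : Multiset (Fin n)) : ∀ (b' : Fin d → ℤ) (m : M), m ∈ g b' →
      (Ideal.Quotient.mk (toricIdeal A) (l.map MvPolynomial.X).prod) • m
        ∈ g (b' - (l.map (col A)).sum) := by
  induction l using Multiset.induction_on with
  | empty =>
    intro b' m hm
    simpa using hm
  | cons a l ih =>
    intro b' m hm
    have h2 := hX a _ _ (ih b' m hm)
    simp only [Multiset.map_cons, Multiset.prod_cons, Multiset.sum_cons, map_mul, mul_smul]
    have hdeg : b' - (col A a + (l.map (col A)).sum) = b' - (l.map (col A)).sum - col A a := by
      abel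
    rwa [hdeg]

lemma linIndep_of_filtration {M : Type} [AddCommGroup M] [Module ℂ M] {k : ℕ}
    (P : Fin (k+1) → Submodule ℂ M) (hP : Monotone P) (f : Fin k → M)
    (hmem : ∀ i, f i ∈ P i.succ) (hnot : ∀ i, f i ∉ P i.castSucc) :
    LinearIndependent ℂ f := by
  classical
  rw [linearIndependent_iff']
  intro s g hsum i hi
  by_contra hgi
  set T := s.filter (fun i => g i ≠ 0) with hT
  have hTne : T.Nonempty := ⟨i, Finset.mem_filter.mpr ⟨hi, hgi⟩⟩
  set i0 := T.max' hTne with hi0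
  have hi0T : i0 ∈ T := T.max'_mem hTne
  have hgi0 : g i0 ≠ 0 := (Finset.mem_filter.mp hi0T).2
  have hsum' : ∑ j ∈ T, g j • f j = 0 := by
    rw [← hsum]
    refine Finset.sum_subset (Finset.filter_subset _ _) fun x hx hxT => ?_
    have hx0 : g x = 0 := by
      by_contra h; exact hxT (Finset.mem_filter.mpr ⟨hx, h⟩)
    rw [hx0, zero_smul]
  have hkey : g i0 • f i0 = -∑ j ∈ T.erase i0, g j • f j := by
    rw [eq_neg_iff_add_eq_zero, ← Finset.add_sum_erase T _ hi0T] at *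
    exact hsum'
  have hmemc : g i0 • f i0 ∈ P i0.castSucc := by
    rw [hkey]
    refine neg_mem (Submodule.sum_mem _ fun j hj => ?_)
    have hjT := Finset.mem_of_mem_erase hj
    have hjne := Finset.ne_of_mem_erase hj
    have hlt : j < i0 := lt_of_le_of_ne (T.le_max' j hjT) hjne
    have hle : P j.succ ≤ P i0.castSucc := by
      apply hP
      simp only [Fin.le_def, Fin.val_succ, Fin.coe_castSucc]
      exact hlt
    exact Submodule.smul_mem _ _ (hle (hmem j))
  refine hnot i0 ?_
  have hfin := Submodule.smul_mem (P i0.castSucc) (g i0)⁻¹ hmemc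
  rwa [smul_smul, inv_mul_cancel₀ hgi0, one_smul] at hfin

end Aux

/-!
STATEMENT 18: Let `F` be a face of `A` and `b_1,…,b_k ∈ ℤ^d` lie in a common coset
of `(ℚF ∩ ℤ^d)/ℤF` (equivalently: pairwise differences in `ℤF`). Then the
intersection `∩_i (ℕF - b_i)` is nonempty. Consequently, if a `ℤ^d`-graded
`S_A`-module `M` has a filtration with `k` successive quotients isomorphic to
`S_F(b_1),…,S_F(b_k)`, then `dim_ℂ M_c ≥ k` for some degree `c`.
-/
theorem face_coset_intersection_and_dim_bound {d n : ℕ}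
    (A : Matrix (Fin d) (Fin n) ℤ) (F : Finset (Fin n)) (hF : isFace A F)
    (k : ℕ) (b : Fin k → Fin d → ℤ)
    -- the `b_i` lie in a common coset of `(ℚF ∩ ℤ^d)/ℤF`; in particular their
    -- pairwise differences lie in `ℤF`:
    (hcoset : ∀ i i' : Fin k, b i - b i' ∈ ZFlat A F) :
    -- the translated semigroups `ℕF - b_i` have a common element:
    (∃ c : Fin d → ℤ, ∀ i : Fin k, c + b i ∈ NFsg A F) ∧
    -- the consequence for filtered graded modules:
    (∀ (M : Type) [AddCommGroup M] [Module ℂ M] [Module (SAring A) M]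
        [IsScalarTower ℂ (SAring A) M],
      ∀ g : (Fin d → ℤ) → Submodule ℂ M,
        DirectSum.IsInternal g →
        (∀ (j : Fin n) (b' : Fin d → ℤ), ∀ m ∈ g b',
          (Ideal.Quotient.mk (toricIdeal A) (MvPolynomial.X j)) • m ∈ g (b' - col A j)) →
        ∀ N : Fin (k + 1) → Submodule (SAring A) M, Monotone N →
        ∀ mg : Fin k → M,
        (∀ i : Fin k, mg i ∈ g (b i) ∧ mg i ∈ N i.succ ∧
          N i.succ = N i.castSucc ⊔ Submodule.span (SAring A) {mg i} ∧
          ∀ r : SAring A, r • mg i ∈ N i.castSucc ↔ r ∈ facePrime A F) →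
        ∃ c : Fin d → ℤ, (k : Cardinal) ≤ Module.rank ℂ ↥(g c)) := by
  have part1 : ∃ c : Fin d → ℤ, ∀ i : Fin k, c + b i ∈ NFsg A F := by
    rcases isEmpty_or_nonempty (Fin k) with hk | hk
    · exact ⟨0, fun i => (hk.false i).elim⟩
    · obtain ⟨i0⟩ := hk
      choose p hp q hq hpq using fun i => ZF_diff A F (hcoset i i0)
      refine ⟨(∑ j, q j) - b i0, fun i => ?_⟩
      have h2 : ∑ j ∈ Finset.univ.erase i, q j = (∑ j, q j) - q i := by
        rw [eq_sub_iff_add_eq, Finset.sum_erase_add _ _ (Finset.mem_univ i)]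
      have heq : (∑ j, q j) - b i0 + b i = p i + ∑ j ∈ Finset.univ.erase i, q j := by
        rw [h2]
        have h1 := hpq i
        funext x
        have h1x := congrFun h1 x
        simp only [Pi.add_apply, Pi.sub_apply, Pi.add_apply] at *
        linarith
      rw [heq]
      exact (NFsg A F).add_mem (hp i)
        (AddSubmonoid.sum_mem _ fun j _ => hq j)
  refine ⟨part1, ?_⟩
  intro M _ _ _ _ g _ hX N hN mg hm
  obtain ⟨c, hc⟩ := part1
  choose l hl hls using fun i => NF_multiset A F (hc i)
  set m' : Fin k → M := fun i =>
    (Ideal.Quotient.mk (toricIdeal A) ((l i).map MvPolynomial.X).prod) • mg i with hm'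
  have hm'deg : ∀ i, m' i ∈ g (-c) := by
    intro i
    have hmm := prodX_smul_mem A g hX (l i) (b i) (mg i) (hm i).1
    rw [hls i] at hmm
    have : b i - (c + b i) = -c := by abel
    rwa [this] at hmm
  have hm'mem : ∀ i, m' i ∈ (N i.succ).restrictScalars ℂ :=
    fun i => Submodule.smul_mem _ _ (hm i).2.1
  have hm'not : ∀ i, m' i ∉ (N i.castSucc).restrictScalars ℂ := by
    intro i hcon
    exact mk_prodX_not_mem_facePrime A F hF (l i) (hl i)
      (((hm i).2.2.2 _).mp hcon)
  have li : LinearIndependent ℂ m' :=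
    linIndep_of_filtration (fun i => (N i).restrictScalars ℂ)
      (fun a b hab x hx => hN hab hx) m' hm'mem hm'not
  have li' : LinearIndependent ℂ (fun i : Fin k => (⟨m' i, hm'deg i⟩ : g (-c))) :=
    LinearIndependent.of_comp (g (-c)).subtype li
  refine ⟨-c, ?_⟩
  have := li'.cardinal_le_rank
  rwa [Cardinal.mk_fin] at this
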